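/- Let G_parity be the group of evenly-signed n×n permutation matrices acting on functions on EVEN_n. For each 0 ≤ k ≤ ⌊n/2⌋ the subspace Pol_k(EVEN_n) (spanned by the e_I with |I| = k when k < n/2, and by the (e_I + e_{Iᶜ})/2 with |I| = n/2 when k = n/2) is an irreducible G_parity-invariant subspace, and F(EVEN_n, ℝ) = Pol₀(EVEN_n) ⊕ ⋯ ⊕ Pol_{⌊n/2⌋}(EVEN_n). -/

import Mathlib

/-- The set `EVEN_n` of `±1` vectors with an even number of `-1`'s, as a type. -/
def EvenPt (n : ℕ) : Type :=
  {x : Fin n → ℝ // (∀ i, x i = 1 ∨ x i = -1) ∧ ∏ i, x i = 1}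

/-- The action of an evenly-signed permutation (a permutation `σ` together with signs
`ε` having an even number of `-1`'s, i.e. `∏ i, ε i = 1`) on `EVEN_n`. -/
def parityAct (n : ℕ) (σ : Equiv.Perm (Fin n)) (ε : Fin n → ℝ)
    (hε : (∀ i, ε i = 1 ∨ ε i = -1) ∧ ∏ i, ε i = 1) (x : EvenPt n) : EvenPt n :=
  ⟨fun i => ε i * x.1 (σ i), by
    refine ⟨fun i => ?_, ?_⟩
    · rcases hε.1 i with h | h <;> rcases x.2.1 (σ i) with h' | h' <;> simp [h, h']
    · rw [Finset.prod_mul_distrib, hε.2, one_mul, Equiv.prod_comp σ x.1, x.2.2]⟩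

/-- A subspace of functions on `EVEN_n` is `G_parity`-invariant if it is preserved by
all evenly-signed permutations. -/
def IsParityInvariant (n : ℕ) (V : Submodule ℝ (EvenPt n → ℝ)) : Prop :=
  ∀ (σ : Equiv.Perm (Fin n)) (ε : Fin n → ℝ)
    (hε : (∀ i, ε i = 1 ∨ ε i = -1) ∧ ∏ i, ε i = 1),
    ∀ f ∈ V, (fun x => f (parityAct n σ ε hε x)) ∈ V

/-- `Pol_k(EVEN_n)`: for `k < n/2` the span of the monomials `e_I` with `|I| = k`; for
`2k = n` the span of the functions `(e_I + e_{Iᶜ})/2` with `|I| = n/2`. -/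
def PolEven (n k : ℕ) : Submodule ℝ (EvenPt n → ℝ) :=
  if 2 * k = n then
    Submodule.span ℝ
      {f | ∃ I : Finset (Fin n), I.card = k ∧
        f = fun x : EvenPt n => ((∏ i ∈ I, x.1 i) + ∏ i ∈ Iᶜ, x.1 i) / 2}
  else
    Submodule.span ℝ
      {f | ∃ I : Finset (Fin n), I.card = k ∧ f = fun x : EvenPt n => ∏ i ∈ I, x.1 i}

namespace PolAux

open Finset

variable {n : ℕ}

noncomputable instance : Fintype (EvenPt n) := by
  classical
  have : Function.Injective (fun x : EvenPt n => (fun i => x.1 i = 1 : Fin n → Prop)) := by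
    intro x y h
    apply Subtype.ext; funext i
    have hi := congrFun h i
    rcases x.2.1 i with hx | hx <;> rcases y.2.1 i with hy | hy <;>
      simp [hx, hy] at hi ⊢ <;> simp_all
  have : Finite (EvenPt n) := Finite.of_injective _ this
  exact Fintype.ofFinite _

/-- The monomial `e_I`. -/
def eF (I : Finset (Fin n)) : EvenPt n → ℝ := fun x => ∏ i ∈ I, x.1 i

lemma sq_one (x : EvenPt n) (i : Fin n) : x.1 i * x.1 i = 1 := by
  rcases x.2.1 i with h | h <;> simp [h]

lemma eF_sq (I : Finset (Fin n)) (x : EvenPt n) : eF I x * eF I x = 1 := by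
  rw [eF, ← Finset.prod_mul_distrib]
  exact Finset.prod_eq_one fun i _ => sq_one x i

lemma eF_mul (I J : Finset (Fin n)) (x : EvenPt n) :
    eF I x * eF J x = eF (symmDiff I J) x := by
  classical
  have hI : eF I x = eF (I \ J) x * eF (I ∩ J) x := by
    rw [eF, eF, eF, ← Finset.prod_sdiff (Finset.inter_subset_left (s₁ := I) (s₂ := J)),
      Finset.sdiff_inter_self_left]
  have hJ : eF J x = eF (J \ I) x * eF (I ∩ J) x := by
    have h := Finset.prod_sdiff (f := fun i => x.1 i)
      (Finset.inter_subset_left (s₁ := J) (s₂ := I))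
    rw [Finset.sdiff_inter_self_left, Finset.inter_comm] at h
    rw [eF, eF, eF, ← h]
  have hsq : eF (I ∩ J) x * eF (I ∩ J) x = 1 := eF_sq _ x
  have hu : eF (symmDiff I J) x = eF (I \ J) x * eF (J \ I) x := by
    rw [symmDiff_def, eF, eF, eF]
    exact Finset.prod_union disjoint_sdiff_sdiff
  have hsq' : eF (I ∩ J) x ^ 2 = 1 := by rw [sq]; exact hsq
  rw [hI, hJ, hu]; ring_nf; rw [hsq', mul_one]

/-- On `EVEN_n`, `e_{Iᶜ} = e_I`. -/
lemma eF_compl (I : Finset (Fin n)) : eF Iᶜ = (eF I : EvenPt n → ℝ) := by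
  funext x
  have h1 : eF Iᶜ x * eF I x = 1 := by
    rw [eF, eF, Finset.compl_eq_univ_sdiff]
    exact (Finset.prod_sdiff (Finset.subset_univ I)).trans x.2.2
  calc eF Iᶜ x = eF Iᶜ x * (eF I x * eF I x) := by rw [eF_sq, mul_one]
  _ = (eF Iᶜ x * eF I x) * eF I x := by ring
  _ = eF I x := by rw [h1, one_mul]

/-- Translation by an element of `EVEN_n`. -/
def transl (z x : EvenPt n) : EvenPt n := parityAct n 1 z.1 z.2 x

lemma transl_apply (z x : EvenPt n) (i : Fin n) : (transl z x).1 i = z.1 i * x.1 i := rfl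

lemma transl_invol (z : EvenPt n) : Function.Involutive (transl (n := n) z) := by
  intro x
  apply Subtype.ext; funext i
  show z.1 i * (z.1 i * x.1 i) = x.1 i
  rw [← mul_assoc, sq_one z i, one_mul]

lemma transl_comm (z x : EvenPt n) : transl z x = transl x z := by
  apply Subtype.ext; funext i; exact mul_comm _ _

lemma eF_transl (I : Finset (Fin n)) (z x : EvenPt n) :
    eF I (transl z x) = eF I z * eF I x := by
  rw [eF, eF, eF, ← Finset.prod_mul_distrib]; rfl

lemma eF_parityAct (I : Finset (Fin n)) (σ : Equiv.Perm (Fin n)) (ε : Fin n → ℝ) (hε)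
    (x : EvenPt n) :
    eF I (parityAct n σ ε hε x) = (∏ i ∈ I, ε i) * eF (I.image σ) x := by
  rw [eF, eF]
  show (∏ i ∈ I, ε i * x.1 (σ i)) = _
  rw [Finset.prod_mul_distrib, Finset.prod_image (fun a _ b _ h => σ.injective h)]

/-- The bilinear pairing. -/
noncomputable def B (f g : EvenPt n → ℝ) : ℝ := ∑ x : EvenPt n, f x * g x

lemma B_comm (f g : EvenPt n → ℝ) : B f g = B g f := by
  unfold B; exact Finset.sum_congr rfl fun x _ => mul_comm _ _

lemma B_self_eq_zero {f : EvenPt n → ℝ} (h : B f f = 0) : f = 0 := by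
  funext x
  have hx : ∀ y ∈ Finset.univ (α := EvenPt n), 0 ≤ f y * f y := fun y _ => mul_self_nonneg _
  have := (Finset.sum_eq_zero_iff_of_nonneg hx).1 h x (Finset.mem_univ x)
  exact mul_self_eq_zero.1 this

/-- Key vanishing: the sum of a nontrivial character over `EVEN_n` is zero. -/
lemma sum_eF_eq_zero {K : Finset (Fin n)} (h0 : K ≠ ∅) (h1 : K ≠ Finset.univ) :
    ∑ x : EvenPt n, eF K x = 0 := by
  classical
  obtain ⟨i, hi⟩ := Finset.nonempty_iff_ne_empty.2 h0
  obtain ⟨j, hj⟩ : ∃ j, j ∉ K := by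
    by_contra h; push_neg at h
    exact h1 (Finset.eq_univ_of_forall h)
  have hij : i ≠ j := fun h => hj (h ▸ hi)
  set ε : Fin n → ℝ :=
    fun t => (if t = i then -1 else 1) * (if t = j then -1 else 1) with hεdef
  have hε : (∀ t, ε t = 1 ∨ ε t = -1) ∧ ∏ t, ε t = 1 := by
    constructor
    · intro t
      by_cases h1 : t = i <;> by_cases h2 : t = j <;> simp_all [hεdef]
    · rw [hεdef, Finset.prod_mul_distrib,
        Finset.prod_ite_eq' Finset.univ i (fun _ => (-1 : ℝ)),
        Finset.prod_ite_eq' Finset.univ j (fun _ => (-1 : ℝ))]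
      simp
  set z : EvenPt n := ⟨ε, hε⟩ with hz
  have hεK : eF K z = -1 := by
    rw [eF]
    show ∏ t ∈ K, ((if t = i then (-1:ℝ) else 1) * (if t = j then -1 else 1)) = -1
    rw [Finset.prod_mul_distrib, Finset.prod_ite_eq' K i (fun _ => (-1 : ℝ)),
      Finset.prod_ite_eq' K j (fun _ => (-1 : ℝ))]
    simp [hi, hj]
  have key : ∑ x : EvenPt n, eF K x = ∑ x : EvenPt n, eF K (transl z x) :=
    (Equiv.sum_comp (Function.Involutive.toPerm _ (transl_invol z)) (eF K)).symm
  have : ∑ x : EvenPt n, eF K (transl z x) = -∑ x : EvenPt n, eF K x := by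
    rw [← Finset.sum_neg_distrib]
    refine Finset.sum_congr rfl fun x _ => ?_
    rw [eF_transl, hεK, neg_one_mul]
  linarith [key, this]


lemma B_eF_eq_zero {I J : Finset (Fin n)} (hIJ : I ≠ J) (hIJc : J ≠ Iᶜ) :
    B (eF I) (eF J) = 0 := by
  classical
  unfold B
  have h : ∀ x : EvenPt n, eF I x * eF J x = eF (symmDiff I J) x := eF_mul I J
  rw [Finset.sum_congr rfl fun x _ => h x]
  apply sum_eF_eq_zero
  · intro hbot
    exact hIJ (symmDiff_eq_bot.1 hbot)
  · intro htop
    apply hIJc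
    ext a
    have ha : a ∈ symmDiff I J := htop ▸ Finset.mem_univ a
    rw [Finset.mem_symmDiff] at ha
    simp only [Finset.mem_compl]
    tauto

/-- Uniform description of `PolEven` as a span of monomials. -/
lemma polEven_eq (k : ℕ) :
    PolEven n k = Submodule.span ℝ {f | ∃ I : Finset (Fin n), I.card = k ∧ f = eF I} := by
  unfold PolEven
  split_ifs with h
  · congr 1
    ext f
    constructor
    · rintro ⟨I, hI, rfl⟩
      refine ⟨I, hI, ?_⟩
      funext x
      show ((∏ i ∈ I, x.1 i) + ∏ i ∈ Iᶜ, x.1 i) / 2 = eF I x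
      have := congrFun (eF_compl I) x
      rw [eF] at this ⊢
      rw [this, eF]; ring
    · rintro ⟨I, hI, rfl⟩
      refine ⟨I, hI, ?_⟩
      funext x
      show eF I x = ((∏ i ∈ I, x.1 i) + ∏ i ∈ Iᶜ, x.1 i) / 2
      have := congrFun (eF_compl I) x
      rw [eF] at this ⊢
      rw [this, eF]; ring
  · rfl

/-- Composition with a map of `EVEN_n`, as a linear map on functions. -/
def compLM (φ : EvenPt n → EvenPt n) : (EvenPt n → ℝ) →ₗ[ℝ] (EvenPt n → ℝ) where
  toFun f := fun x => f (φ x)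
  map_add' f g := rfl
  map_smul' c f := rfl

lemma eF_mem_polEven {I : Finset (Fin n)} {k : ℕ} (h : I.card = k) :
    eF I ∈ PolEven n k := by
  rw [polEven_eq]
  exact Submodule.subset_span ⟨I, h, rfl⟩

lemma polEven_invariant (k : ℕ) : IsParityInvariant n (PolEven n k) := by
  intro σ ε hε f hf
  have : (fun x => f (parityAct n σ ε hε x)) = compLM (parityAct n σ ε hε) f := rfl
  rw [this]
  have hmem : compLM (parityAct n σ ε hε) f ∈
      Submodule.map (compLM (parityAct n σ ε hε)) (PolEven n k) :=
    Submodule.mem_map_of_mem hf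
  refine (?_ : Submodule.map (compLM (parityAct n σ ε hε)) (PolEven n k) ≤ PolEven n k) hmem
  conv_lhs => rw [polEven_eq]
  rw [LinearMap.map_span, Submodule.span_le]
  rintro g ⟨g', ⟨I, hI, rfl⟩, rfl⟩
  have heq : compLM (parityAct n σ ε hε) (eF I) = (∏ i ∈ I, ε i) • eF (I.image σ) := by
    funext x
    exact eF_parityAct I σ ε hε x
  rw [SetLike.mem_coe, heq]
  exact Submodule.smul_mem _ _ (eF_mem_polEven (by
    rw [Finset.card_image_of_injective _ σ.injective, hI]))

/-- Linearity of `B` in the second argument as a linear map. -/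
noncomputable def Blm (f : EvenPt n → ℝ) : (EvenPt n → ℝ) →ₗ[ℝ] ℝ where
  toFun g := B f g
  map_add' g h := by
    unfold B
    rw [← Finset.sum_add_distrib]
    exact Finset.sum_congr rfl fun x _ => by simp [mul_add]
  map_smul' c g := by
    unfold B
    simp only [RingHom.id_apply, smul_eq_mul, Finset.mul_sum, Pi.smul_apply]
    exact Finset.sum_congr rfl fun x _ => by ring

lemma B_eq_zero_of_mem_polEven {k : ℕ} {f g : EvenPt n → ℝ}
    (horth : ∀ I : Finset (Fin n), I.card = k → B f (eF I) = 0)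
    (hg : g ∈ PolEven n k) : B f g = 0 := by
  have : PolEven n k ≤ LinearMap.ker (Blm f) := by
    rw [polEven_eq, Submodule.span_le]
    rintro h ⟨I, hI, rfl⟩
    exact horth I hI
  exact this hg


/-- The all-ones point. -/
def onePt : EvenPt n := ⟨fun _ => 1, fun _ => Or.inl rfl, by simp⟩

lemma eF_ne_zero (I : Finset (Fin n)) : eF I ≠ (0 : EvenPt n → ℝ) := by
  intro h
  have h1 : eF I onePt = 0 := by rw [h]; rfl
  rw [eF] at h1
  have : ∏ i ∈ I, (onePt : EvenPt n).1 i = 1 := Finset.prod_eq_one fun i _ => rfl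
  rw [this] at h1
  norm_num at h1

lemma polEven_ne_bot {k : ℕ} (hk : 2 * k ≤ n) : PolEven n k ≠ ⊥ := by
  obtain ⟨I, -, hI⟩ := Finset.exists_subset_card_eq
    (s := (Finset.univ : Finset (Fin n))) (n := k)
    (by rw [Finset.card_univ, Fintype.card_fin]; omega)
  intro hbot
  have hm := eF_mem_polEven (n := n) hI
  rw [hbot, Submodule.mem_bot] at hm
  exact eF_ne_zero I hm

/-- Rescaled delta function. -/
noncomputable def gfun (y : EvenPt n) : EvenPt n → ℝ := fun x => ∏ i, (x.1 i * y.1 i + 1)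

lemma gfun_eq_sum (y : EvenPt n) :
    gfun y = ∑ I ∈ (Finset.univ : Finset (Fin n)).powerset,
      eF I y • (eF I : EvenPt n → ℝ) := by
  classical
  funext x
  rw [Finset.sum_apply, gfun]
  rw [Finset.prod_add]
  refine Finset.sum_congr rfl fun I _ => ?_
  simp only [Pi.smul_apply, smul_eq_mul, Finset.prod_const_one, mul_one]
  rw [Finset.prod_mul_distrib, eF, eF]
  ring

lemma gfun_self (x : EvenPt n) : gfun x x = 2 ^ n := by
  rw [gfun]
  have h : ∀ i ∈ (Finset.univ : Finset (Fin n)), x.1 i * x.1 i + 1 = 2 :=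
    fun i _ => by rw [sq_one]; norm_num
  rw [Finset.prod_congr rfl h, Finset.prod_const, Finset.card_univ, Fintype.card_fin]

lemma gfun_ne {y x : EvenPt n} (h : y ≠ x) : gfun y x = 0 := by
  have hex : ∃ i, x.1 i ≠ y.1 i := by
    by_contra hc; push_neg at hc
    exact h (Subtype.ext (funext fun i => (hc i).symm))
  obtain ⟨i, hi⟩ := hex
  apply Finset.prod_eq_zero (Finset.mem_univ i)
  rcases x.2.1 i with h1 | h1 <;> rcases y.2.1 i with h2 | h2 <;> simp_all <;> norm_num

lemma sup_eq_top : (⨆ j : Fin (n / 2 + 1), PolEven n (j : ℕ)) = ⊤ := by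
  classical
  rw [eq_top_iff]
  intro f _
  have heF : ∀ I : Finset (Fin n), eF I ∈ ⨆ j : Fin (n / 2 + 1), PolEven n (j : ℕ) := by
    intro I
    have hcard : I.card ≤ n := by
      have := Finset.card_le_univ I
      rwa [Fintype.card_fin] at this
    by_cases h : 2 * I.card ≤ n
    · have hlt : I.card < n / 2 + 1 := by omega
      exact le_iSup (fun j : Fin (n / 2 + 1) => PolEven n (j : ℕ)) ⟨I.card, hlt⟩
        (eF_mem_polEven rfl)
    · have hcc : Iᶜ.card = n - I.card := by
        rw [Finset.card_compl, Fintype.card_fin]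
      have hlt : Iᶜ.card < n / 2 + 1 := by omega
      rw [← eF_compl]
      exact le_iSup (fun j : Fin (n / 2 + 1) => PolEven n (j : ℕ)) ⟨Iᶜ.card, hlt⟩
        (eF_mem_polEven rfl)
  have hg : ∀ y : EvenPt n, gfun y ∈ ⨆ j : Fin (n / 2 + 1), PolEven n (j : ℕ) := by
    intro y
    rw [gfun_eq_sum]
    exact Submodule.sum_mem _ fun I _ => Submodule.smul_mem _ _ (heF I)
  have h2n : (2 : ℝ) ^ n ≠ 0 := by positivity
  have hf : f = ((2 : ℝ) ^ n)⁻¹ • ∑ y : EvenPt n, f y • gfun y := by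
    funext x
    simp only [Pi.smul_apply, Finset.sum_apply, smul_eq_mul]
    rw [Finset.sum_eq_single x (fun y _ hy => by rw [gfun_ne hy, mul_zero])
      (fun hx => absurd (Finset.mem_univ x) hx)]
    rw [gfun_self]
    field_simp
  rw [hf]
  exact Submodule.smul_mem _ _ (Submodule.sum_mem _ fun y _ => Submodule.smul_mem _ _ (hg y))

lemma indep : iSupIndep (fun j : Fin (n / 2 + 1) => PolEven n (j : ℕ)) := by
  intro k
  rw [Submodule.disjoint_def]
  intro f hfk hfs
  have horth : ∀ I : Finset (Fin n), I.card = (k : ℕ) → B f (eF I) = 0 := by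
    intro I hI
    have hker : (⨆ j, ⨆ (_ : j ≠ k), PolEven n (j : ℕ)) ≤ LinearMap.ker (Blm (eF I)) := by
      refine iSup_le fun j => iSup_le fun hj => ?_
      rw [polEven_eq, Submodule.span_le]
      rintro g ⟨J, hJ, rfl⟩
      have hvne : (j : ℕ) ≠ (k : ℕ) := fun h => hj (Fin.ext h)
      have hne1 : I ≠ J := fun h => hvne (by rw [← hI, ← hJ, h])
      have hne2 : J ≠ Iᶜ := by
        intro h
        have hJc : J.card = n - I.card := by rw [h, Finset.card_compl, Fintype.card_fin]
        have hIc : I.card ≤ n := by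
          have := Finset.card_le_univ I
          rwa [Fintype.card_fin] at this
        have hj2 := j.isLt
        have hk2 := k.isLt
        omega
      exact B_eF_eq_zero hne1 hne2
    have := hker hfs
    rw [LinearMap.mem_ker] at this
    rw [B_comm]
    exact this
  have := B_eq_zero_of_mem_polEven horth hfk
  exact B_self_eq_zero this

lemma irreducible {k : ℕ} (V : Submodule ℝ (EvenPt n → ℝ))
    (hV : V ≤ PolEven n k) (hinv : IsParityInvariant n V) (hne : V ≠ ⊥) :
    V = PolEven n k := by
  classical
  obtain ⟨f, hfV, hf0⟩ := Submodule.exists_mem_ne_zero_of_ne_bot hne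
  have hA : ∃ I : Finset (Fin n), I.card = k ∧ B f (eF I) ≠ 0 := by
    by_contra hc; push_neg at hc
    exact hf0 (B_self_eq_zero (B_eq_zero_of_mem_polEven (fun I hI => hc I hI) (hV hfV)))
  obtain ⟨I, hIcard, hIne⟩ := hA
  have hPV : (∑ z : EvenPt n, eF I z • (fun x => f (transl z x)) : EvenPt n → ℝ) ∈ V :=
    Submodule.sum_mem _ fun z _ => Submodule.smul_mem _ _ (hinv 1 z.1 z.2 f hfV)
  have hPformula : (∑ z : EvenPt n, eF I z • (fun x => f (transl z x)) : EvenPt n → ℝ)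
      = B f (eF I) • eF I := by
    funext x
    simp only [Finset.sum_apply, Pi.smul_apply, smul_eq_mul]
    have step0 : ∀ z : EvenPt n, eF I z * f (transl z x) = eF I z * f (transl x z) :=
      fun z => by rw [transl_comm]
    rw [Finset.sum_congr rfl fun z _ => step0 z]
    have step1 : ∑ z : EvenPt n, eF I z * f (transl x z)
        = ∑ z : EvenPt n, eF I (transl x z) * f (transl x (transl x z)) := by
      exact (Equiv.sum_comp (Function.Involutive.toPerm _ (transl_invol x))
        (fun z => eF I z * f (transl x z))).symm
    rw [step1]
    have step2 : ∀ z : EvenPt n, eF I (transl x z) * f (transl x (transl x z))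
        = eF I x * (eF I z * f z) := fun z => by
      rw [eF_transl, transl_invol x z]; ring
    rw [Finset.sum_congr rfl fun z _ => step2 z, ← Finset.mul_sum]
    have : ∑ z : EvenPt n, eF I z * f z = B f (eF I) := by
      rw [B]; exact Finset.sum_congr rfl fun z _ => mul_comm _ _
    rw [this]; ring
  have heFV : eF I ∈ V := by
    have hsm := Submodule.smul_mem V (B f (eF I))⁻¹ hPV
    rwa [hPformula, smul_smul, inv_mul_cancel₀ hIne, one_smul] at hsm
  have hall : ∀ J : Finset (Fin n), J.card = k → eF J ∈ V := by
    intro J hJ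
    let e1 : {x // x ∈ I} ≃ {x // x ∈ J} := Finset.equivOfCardEq (by rw [hIcard, hJ])
    let e2' : {x // x ∈ Iᶜ} ≃ {x // x ∈ Jᶜ} := Finset.equivOfCardEq
      (by rw [Finset.card_compl, Finset.card_compl, hIcard, hJ])
    let e2 : {x // ¬ x ∈ I} ≃ {x // ¬ x ∈ J} :=
      ((Equiv.subtypeEquivRight fun x => (Finset.mem_compl).symm).trans e2').trans
        (Equiv.subtypeEquivRight fun x => Finset.mem_compl)
    let σ : Equiv.Perm (Fin n) := Equiv.subtypeCongr e1 e2
    have hmemJ : ∀ i ∈ I, σ i ∈ J := by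
      intro i hi
      have hstep : σ i = ((Equiv.sumCompl (· ∈ J))
          ((Equiv.sumCongr e1 e2) ((Equiv.sumCompl (· ∈ I)).symm i))) := rfl
      rw [hstep, Equiv.sumCompl_symm_apply_of_pos hi]
      simp only [Equiv.sumCongr_apply, Sum.map_inl, Equiv.sumCompl_apply_inl]
      exact (e1 ⟨i, hi⟩).2
    have himg : I.image σ = J := by
      apply Finset.eq_of_subset_of_card_le
      · intro a ha
        obtain ⟨i, hi, rfl⟩ := Finset.mem_image.1 ha
        exact hmemJ i hi
      · rw [Finset.card_image_of_injective _ σ.injective, hIcard, hJ]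
    have hε1 : (∀ i, (fun _ : Fin n => (1:ℝ)) i = 1 ∨ (fun _ : Fin n => (1:ℝ)) i = -1) ∧
        (∏ i, (fun _ : Fin n => (1:ℝ)) i) = 1 := ⟨fun _ => Or.inl rfl, by simp⟩
    have hact := hinv σ _ hε1 (eF I) heFV
    have heq : (fun x => eF I (parityAct n σ (fun _ : Fin n => (1:ℝ)) hε1 x)) = eF J := by
      funext x
      rw [eF_parityAct, himg]
      simp
    rwa [heq] at hact
  refine le_antisymm hV ?_
  rw [polEven_eq, Submodule.span_le]
  rintro g ⟨J, hJ, rfl⟩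
  exact hall J hJ

end PolAux

/-- Each `Pol_k(EVEN_n)` for `0 ≤ k ≤ ⌊n/2⌋` is a nonzero irreducible
`G_parity`-invariant subspace, and the space of functions on `EVEN_n` is the internal
direct sum `Pol₀(EVEN_n) ⊕ ⋯ ⊕ Pol_{⌊n/2⌋}(EVEN_n)`. -/
theorem polEven_irreducible_decomposition (n : ℕ) :
    (∀ k, 2 * k ≤ n →
      PolEven n k ≠ ⊥ ∧
      IsParityInvariant n (PolEven n k) ∧
      ∀ V : Submodule ℝ (EvenPt n → ℝ), V ≤ PolEven n k → IsParityInvariant n V →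
        V = ⊥ ∨ V = PolEven n k) ∧
    DirectSum.IsInternal (fun j : Fin (n / 2 + 1) => PolEven n (j : ℕ)) := by
  constructor
  · intro k hk
    refine ⟨PolAux.polEven_ne_bot hk, PolAux.polEven_invariant k, fun V hV hinv => ?_⟩
    by_cases hb : V = ⊥
    · exact Or.inl hb
    · exact Or.inr (PolAux.irreducible V hV hinv hb)
  · rw [DirectSum.isInternal_submodule_iff_iSupIndep_and_iSup_eq_top]
    exact ⟨PolAux.indep, PolAux.sup_eq_top⟩
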